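/- For every Boolean network f of dimension n, the min-trapping extension satisfies: f ⊑ f^M, (f^M)^M = f^M, and MT(f^M) = MT(f). -/
import Mathlib


/-!  Common definitions: Boolean networks on `Fin n → Bool`. -/

/-- The update `f^{(S)}` of the coordinates in `S` according to `f`. -/
def upd {n : ℕ} (f : (Fin n → Bool) → Fin n → Bool) (S : Finset (Fin n)) :
    (Fin n → Bool) → Fin n → Bool :=
  fun x i => if i ∈ S then f x i else x i

/-- `f^{(S,T)} = f^{(T)} ∘ f^{(S)}`. -/
def upd2 {n : ℕ} (f : (Fin n → Bool) → Fin n → Bool) (S T : Finset (Fin n)) :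
    (Fin n → Bool) → Fin n → Bool :=
  upd f T ∘ upd f S

/-- `Δ(x,y)`, the set of coordinates where `x` and `y` differ. -/
def delta {n : ℕ} (x y : Fin n → Bool) : Set (Fin n) := {i | x i ≠ y i}

/-- Hamming distance. -/
noncomputable def hdist {n : ℕ} (x y : Fin n → Bool) : ℕ := (delta x y).ncard

/-- The interval (subcube) `[x,y]`. -/
def interval {n : ℕ} (x y : Fin n → Bool) : Set (Fin n → Bool) :=
  {z | delta x z ⊆ delta x y}

/-- A subcube of `𝔹^n`: fix the coordinates in `S` to `0` and those in `T` to `1`. -/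
def IsSubcube {n : ℕ} (X : Set (Fin n → Bool)) : Prop :=
  ∃ S T : Set (Fin n), Disjoint S T ∧
    X = {x | (∀ i ∈ S, x i = false) ∧ (∀ i ∈ T, x i = true)}

/-- The partial order `f ⊑ g` on Boolean networks. -/
def BNle {n : ℕ} (f g : (Fin n → Bool) → Fin n → Bool) : Prop :=
  ∀ x, delta x (f x) ⊆ delta x (g x)

/-- A trapspace of `f`: an invariant subcube. -/
def IsTrapspace {n : ℕ} (f : (Fin n → Bool) → Fin n → Bool)
    (X : Set (Fin n → Bool)) : Prop :=
  IsSubcube X ∧ ∀ x ∈ X, f x ∈ X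

/-- The collection of all trapspaces of `f`. -/
def trapspaces {n : ℕ} (f : (Fin n → Bool) → Fin n → Bool) :
    Set (Set (Fin n → Bool)) :=
  {X | IsTrapspace f X}

/-- The principal trapspace `T_f(x)`: the smallest trapspace of `f` containing `x`. -/
def Tprin {n : ℕ} (f : (Fin n → Bool) → Fin n → Bool) (x : Fin n → Bool) :
    Set (Fin n → Bool) :=
  ⋂₀ {X | IsTrapspace f X ∧ x ∈ X}

/-- The collection of principal trapspaces of `f`. -/
def PT {n : ℕ} (f : (Fin n → Bool) → Fin n → Bool) : Set (Set (Fin n → Bool)) :=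
  {X | ∃ x, X = Tprin f x}

-- The opposite of `x` in a subcube `X` containing `x`: the coordinate `i` is flipped
-- iff some element of `X` differs from `x` there; so `[x, opp X x] = X` when `X` is a
-- subcube containing `x`.
open scoped Classical in
noncomputable def opp {n : ℕ} (X : Set (Fin n → Bool)) (x : Fin n → Bool) :
    Fin n → Bool :=
  fun i => if ∃ y ∈ X, y i ≠ x i then !(x i) else x i

/-- The trapping closure `f^T`, characterised by `[x, f^T(x)] = T_f(x)`. -/
noncomputable def trapClosure {n : ℕ} (f : (Fin n → Bool) → Fin n → Bool) :
    (Fin n → Bool) → Fin n → Bool :=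
  fun x => opp (Tprin f x) x

/-- The general asynchronous graph of `f`, as a relation on `𝔹^n`. -/
def GA {n : ℕ} (f : (Fin n → Bool) → Fin n → Bool) :
    (Fin n → Bool) → (Fin n → Bool) → Prop :=
  fun x y => ∃ S : Finset (Fin n), y = upd f S x

/-- The asynchronous graph of `f`, as a relation on `𝔹^n`. -/
def Agraph {n : ℕ} (f : (Fin n → Bool) → Fin n → Bool) :
    (Fin n → Bool) → (Fin n → Bool) → Prop :=
  fun x y => ∃ i : Fin n, y = upd f {i} x

/-- The trapping graph of `f`: an edge `(x,y)` iff `y ∈ T_f(x)`. -/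
def TG {n : ℕ} (f : (Fin n → Bool) → Fin n → Bool) :
    (Fin n → Bool) → (Fin n → Bool) → Prop :=
  fun x y => y ∈ Tprin f x

/-- A network is trapping if its general asynchronous graph is transitive. -/
def IsTrapping {n : ℕ} (f : (Fin n → Bool) → Fin n → Bool) : Prop :=
  Transitive (GA f)

/-- A commutative Boolean network: `f^{(i,j)} = f^{(j,i)}` for all `i,j`. -/
def IsCommutative' {n : ℕ} (f : (Fin n → Bool) → Fin n → Bool) : Prop :=
  ∀ i j : Fin n, upd2 f {i} {j} = upd2 f {j} {i}

/-- `𝒜(x)`: the intersection of all members of `𝒜` containing `x`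
(`= 𝔹^n` if no member contains `x`, since `⋂₀ ∅ = univ`). -/
def collAt {n : ℕ} (𝒜 : Set (Set (Fin n → Bool))) (x : Fin n → Bool) :
    Set (Fin n → Bool) :=
  ⋂₀ {A ∈ 𝒜 | x ∈ A}

/-- The network `F(𝒜)`, characterised by `[x, F(𝒜)(x)] = 𝒜(x)`. -/
noncomputable def Fnet {n : ℕ} (𝒜 : Set (Set (Fin n → Bool))) :
    (Fin n → Bool) → Fin n → Bool :=
  fun x => opp (collAt 𝒜 x) x

/-- A collection of subcubes is pre-principal if `𝒬 = {𝒬(x) : x ∈ 𝔹^n}`. -/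
def PrePrincipal {n : ℕ} (𝒬 : Set (Set (Fin n → Bool))) : Prop :=
  𝒬 = {X | ∃ x, X = collAt 𝒬 x}

/-- `λ(𝒜)`: unions of subcollections of `𝒜` that are subcubes. -/
def lamColl {n : ℕ} (𝒜 : Set (Set (Fin n → Bool))) : Set (Set (Fin n → Bool)) :=
  {X | ∃ ℛ ⊆ 𝒜, X = ⋃₀ ℛ ∧ IsSubcube X}

/-- `μ(𝒜) = {𝒜(x) : x ∈ 𝔹^n}`. -/
def muColl {n : ℕ} (𝒜 : Set (Set (Fin n → Bool))) : Set (Set (Fin n → Bool)) :=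
  {X | ∃ x, X = collAt 𝒜 x}

/-- A pre-ideal collection of subcubes. -/
def PreIdeal {n : ℕ} (𝒥 : Set (Set (Fin n → Bool))) : Prop :=
  Set.univ ∈ 𝒥 ∧
  (∀ A ∈ 𝒥, ∀ B ∈ 𝒥, (A ∩ B).Nonempty → A ∩ B ∈ 𝒥) ∧
  (∀ ℛ ⊆ 𝒥, IsSubcube (⋃₀ ℛ) → ⋃₀ ℛ ∈ 𝒥)

/-- The collection of minimal trapspaces of `f`. -/
def MT {n : ℕ} (f : (Fin n → Bool) → Fin n → Bool) : Set (Set (Fin n → Bool)) :=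
  {X | IsTrapspace f X ∧ ∀ Y, IsTrapspace f Y → ¬ Y ⊂ X}

/-- `M(f)`: the union of the minimal trapspaces of `f`. -/
def Mset {n : ℕ} (f : (Fin n → Bool) → Fin n → Bool) : Set (Fin n → Bool) :=
  ⋃₀ MT f

-- The min-trapping extension `f^M`: `[x, f^M(x)] = T_f(x)` if `x ∈ M(f)`,
-- and `f^M(x) = ¬x` otherwise.
open scoped Classical in
noncomputable def minExt {n : ℕ} (f : (Fin n → Bool) → Fin n → Bool) :
    (Fin n → Bool) → Fin n → Bool :=
  fun x => if x ∈ Mset f then opp (Tprin f x) x else fun i => !(x i)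

section Aux8
variable {n : ℕ}

/-- Coordinates at which some element of `X` differs from `x`. -/
def dset8 (X : Set (Fin n → Bool)) (x : Fin n → Bool) : Set (Fin n) :=
  {i | ∃ y ∈ X, y i ≠ x i}

lemma subcube_eq8 {X : Set (Fin n → Bool)} {x} (hX : IsSubcube X) (hx : x ∈ X) :
    X = {z | delta x z ⊆ dset8 X x} := by
  obtain ⟨S, T, hd, rfl⟩ := hX
  ext z
  constructor
  · intro hz i hi
    exact ⟨z, hz, fun h => hi h.symm⟩
  · intro hz
    refine ⟨fun i hiS => ?_, fun i hiT => ?_⟩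
    · by_cases h : z i = x i
      · rw [h]; exact hx.1 i hiS
      · obtain ⟨y, hy, hyi⟩ := hz (show x i ≠ z i from fun hh => h hh.symm)
        rw [hy.1 i hiS, hx.1 i hiS] at hyi; exact absurd rfl hyi
    · by_cases h : z i = x i
      · rw [h]; exact hx.2 i hiT
      · obtain ⟨y, hy, hyi⟩ := hz (show x i ≠ z i from fun hh => h hh.symm)
        rw [hy.2 i hiT, hx.2 i hiT] at hyi; exact absurd rfl hyi

lemma subcube_of_delta8 (x : Fin n → Bool) (D : Set (Fin n)) :
    IsSubcube {z | delta x z ⊆ D} := by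
  refine ⟨{i | i ∉ D ∧ x i = false}, {i | i ∉ D ∧ x i = true}, ?_, ?_⟩
  · rw [Set.disjoint_left]
    rintro i ⟨_, h1⟩ ⟨_, h2⟩
    rw [h1] at h2; exact absurd h2 (by simp)
  · ext z
    simp only [Set.mem_setOf_eq]
    constructor
    · intro h
      refine ⟨fun i hi => ?_, fun i hi => ?_⟩
      · by_cases hz : x i = z i
        · rw [← hz]; exact hi.2
        · exact absurd (h hz) hi.1
      · by_cases hz : x i = z i
        · rw [← hz]; exact hi.2
        · exact absurd (h hz) hi.1
    · rintro ⟨h1, h2⟩ i hi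
      by_contra hD
      cases hxi : x i with
      | false => exact hi (by rw [hxi, h1 i ⟨hD, hxi⟩])
      | true => exact hi (by rw [hxi, h2 i ⟨hD, hxi⟩])

lemma delta_opp8 (X : Set (Fin n → Bool)) (x : Fin n → Bool) :
    delta x (opp X x) = dset8 X x := by
  ext i
  by_cases h : ∃ y ∈ X, y i ≠ x i <;>
    simp [delta, opp, dset8, h]

lemma opp_mem8 {X : Set (Fin n → Bool)} {x} (hX : IsSubcube X) (hx : x ∈ X) :
    opp X x ∈ X :=
  (Set.ext_iff.mp (subcube_eq8 hX hx) _).mpr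
    (by show delta x (opp X x) ⊆ dset8 X x; rw [delta_opp8])

lemma interval_opp8 {X : Set (Fin n → Bool)} {x} (hX : IsSubcube X) (hx : x ∈ X) :
    interval x (opp X x) = X := by
  conv_rhs => rw [subcube_eq8 hX hx]
  unfold interval
  rw [delta_opp8]

lemma interval_subset8 {X : Set (Fin n → Bool)} (hX : IsSubcube X) {y w}
    (hy : y ∈ X) (hw : w ∈ X) : interval y w ⊆ X := by
  have h := subcube_eq8 hX hy
  intro u hu
  have hw' : delta y w ⊆ dset8 X y := (Set.ext_iff.mp h w).mp hw
  exact (Set.ext_iff.mp h u).mpr (fun i hi => hw' (hu hi))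

lemma sInter_subcube8 {𝒞 : Set (Set (Fin n → Bool))} {x : Fin n → Bool}
    (h : ∀ C ∈ 𝒞, IsSubcube C ∧ x ∈ C) : IsSubcube (⋂₀ 𝒞) := by
  have he : ⋂₀ 𝒞 = {z | delta x z ⊆ {i | ∀ C ∈ 𝒞, i ∈ dset8 C x}} := by
    ext z
    simp only [Set.mem_sInter, Set.mem_setOf_eq]
    constructor
    · intro hz i hi C hC
      exact (Set.ext_iff.mp (subcube_eq8 (h C hC).1 (h C hC).2) z).mp (hz C hC) hi
    · intro hz C hC
      exact (Set.ext_iff.mp (subcube_eq8 (h C hC).1 (h C hC).2) z).mpr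
        (fun i hi => hz hi C hC)
  rw [he]
  exact subcube_of_delta8 x _

lemma subcube_nonempty8 {X : Set (Fin n → Bool)} (hX : IsSubcube X) : X.Nonempty := by
  classical
  obtain ⟨S, T, hd, rfl⟩ := hX
  refine ⟨fun i => if i ∈ T then true else false, fun i hi => ?_, fun i hi => ?_⟩
  · simp [Set.disjoint_left.mp hd hi]
  · simp [hi]

lemma univ_subcube8 : IsSubcube (Set.univ : Set (Fin n → Bool)) :=
  ⟨∅, ∅, by simp, by ext z; simp⟩

lemma univ_trap8 (f : (Fin n → Bool) → Fin n → Bool) :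
    IsTrapspace f Set.univ :=
  ⟨univ_subcube8, fun _ _ => trivial⟩

lemma Tprin_mem8 (f : (Fin n → Bool) → Fin n → Bool) (x : Fin n → Bool) :
    x ∈ Tprin f x :=
  Set.mem_sInter.mpr fun _ hX => hX.2

lemma Tprin_trap8 (f : (Fin n → Bool) → Fin n → Bool) (x : Fin n → Bool) :
    IsTrapspace f (Tprin f x) := by
  constructor
  · exact sInter_subcube8 (x := x) (fun C hC => ⟨hC.1.1, hC.2⟩)
  · intro y hy
    exact Set.mem_sInter.mpr fun X hX => hX.1.2 y (Set.mem_sInter.mp hy X hX)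

lemma Tprin_subset8 {f : (Fin n → Bool) → Fin n → Bool} {x X}
    (hX : IsTrapspace f X) (hx : x ∈ X) : Tprin f x ⊆ X :=
  Set.sInter_subset_of_mem ⟨hX, hx⟩

lemma Tprin_eq_MT8 {f : (Fin n → Bool) → Fin n → Bool} {X x}
    (hX : X ∈ MT f) (hx : x ∈ X) : Tprin f x = X := by
  have h1 := Tprin_subset8 hX.1 hx
  by_contra hne
  exact hX.2 _ (Tprin_trap8 f x) (ssubset_iff_subset_ne.mpr ⟨h1, hne⟩)

lemma exists_MT8 {f : (Fin n → Bool) → Fin n → Bool} :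
    ∀ (k : ℕ) (X : Set (Fin n → Bool)), X.ncard ≤ k → IsTrapspace f X →
      ∃ Y ∈ MT f, Y ⊆ X := by
  intro k
  induction k with
  | zero =>
    intro X hcard hX
    have hne := subcube_nonempty8 hX.1
    have := (Set.ncard_pos X.toFinite).mpr hne
    omega
  | succ k ih =>
    intro X hcard hX
    by_cases hmin : ∀ Y, IsTrapspace f Y → ¬ Y ⊂ X
    · exact ⟨X, ⟨hX, hmin⟩, subset_rfl⟩
    · push_neg at hmin
      obtain ⟨Z, hZ, hZX⟩ := hmin
      have hlt : Z.ncard ≤ k := by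
        have := Set.ncard_lt_ncard hZX X.toFinite
        omega
      obtain ⟨Y, hY, hYZ⟩ := ih Z hlt hZ
      exact ⟨Y, hY, hYZ.trans hZX.subset⟩

lemma minExt_mem8 {f : (Fin n → Bool) → Fin n → Bool} {x} (hx : x ∈ Mset f) :
    minExt f x = opp (Tprin f x) x := by
  simp [minExt, hx]

lemma minExt_not8 {f : (Fin n → Bool) → Fin n → Bool} {x} (hx : x ∉ Mset f) :
    minExt f x = fun i => !(x i) := by
  simp [minExt, hx]

lemma eq_univ_of_neg8 {Y : Set (Fin n → Bool)} (hY : IsSubcube Y) {y}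
    (h1 : y ∈ Y) (h2 : (fun i => !(y i)) ∈ Y) : Y = Set.univ := by
  obtain ⟨S, T, hd, rfl⟩ := hY
  have hS : S = ∅ := by
    ext i
    simp only [Set.mem_empty_iff_false, iff_false]
    intro hi
    have a := h1.1 i hi
    have b := h2.1 i hi
    simp [a] at b
  have hT : T = ∅ := by
    ext i
    simp only [Set.mem_empty_iff_false, iff_false]
    intro hi
    have a := h1.2 i hi
    have b := h2.2 i hi
    simp [a] at b
  subst hS; subst hT
  ext z; simp

lemma MT_trap_minExt8 {f : (Fin n → Bool) → Fin n → Bool} {X}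
    (hX : X ∈ MT f) : IsTrapspace (minExt f) X := by
  refine ⟨hX.1.1, fun y hy => ?_⟩
  have hyM : y ∈ Mset f := ⟨X, hX, hy⟩
  rw [minExt_mem8 hyM, Tprin_eq_MT8 hX hy]
  exact opp_mem8 hX.1.1 hy

lemma trap_minExt_cases8 {f : (Fin n → Bool) → Fin n → Bool} {Y y}
    (hY : IsTrapspace (minExt f) Y) (hy : y ∈ Y) (hne : Y ≠ Set.univ) :
    y ∈ Mset f ∧ Tprin f y ⊆ Y := by
  have hyM : y ∈ Mset f := by
    by_contra hyM
    have h2 : (fun i => !(y i)) ∈ Y := by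
      rw [← minExt_not8 hyM]; exact hY.2 y hy
    exact hne (eq_univ_of_neg8 hY.1 hy h2)
  refine ⟨hyM, ?_⟩
  have hgy : minExt f y ∈ Y := hY.2 y hy
  rw [minExt_mem8 hyM] at hgy
  have := interval_subset8 hY.1 hy hgy
  rwa [interval_opp8 ((Tprin_trap8 f y).1) (Tprin_mem8 f y)] at this

lemma MT_minExt8 (f : (Fin n → Bool) → Fin n → Bool) :
    MT (minExt f) = MT f := by
  ext Y
  constructor
  · intro hY
    by_cases hne : Y = Set.univ
    · subst hne
      obtain ⟨X, hX, hXu⟩ := exists_MT8 (Set.univ : Set (Fin n → Bool)).ncard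
        Set.univ le_rfl (univ_trap8 f)
      have hXY : ¬ X ⊂ Set.univ := hY.2 X (MT_trap_minExt8 hX)
      have : X = Set.univ := by
        by_contra hXe
        exact hXY (ssubset_iff_subset_ne.mpr ⟨Set.subset_univ X, hXe⟩)
      rwa [← this]
    · obtain ⟨y, hy⟩ := subcube_nonempty8 hY.1.1
      obtain ⟨hyM, hsub⟩ := trap_minExt_cases8 hY.1 hy hne
      obtain ⟨X, hX, hyX⟩ := hyM
      have hTX : Tprin f y = X := Tprin_eq_MT8 hX hyX
      have hTmt : Tprin f y ∈ MT f := hTX ▸ hX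
      have : ¬ Tprin f y ⊂ Y := hY.2 _ (MT_trap_minExt8 hTmt)
      have hEq : Tprin f y = Y := by
        by_contra hne'
        exact this (ssubset_iff_subset_ne.mpr ⟨hsub, hne'⟩)
      rwa [← hEq]
  · intro hY
    refine ⟨MT_trap_minExt8 hY, fun Z hZ hZY => ?_⟩
    have hZne : Z ≠ Set.univ := by
      rintro rfl
      exact hZY.ne (Set.eq_univ_of_univ_subset hZY.subset).symm
    obtain ⟨z, hz⟩ := subcube_nonempty8 hZ.1
    obtain ⟨hzM, hsub⟩ := trap_minExt_cases8 hZ hz hZne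
    have hT := Tprin_trap8 f z
    refine hY.2 _ hT (ssubset_iff_subset_ne.mpr ⟨hsub.trans hZY.subset, ?_⟩)
    intro hEq
    exact hZY.ne (le_antisymm hZY.subset (hEq ▸ hsub))

end Aux8

/-- basic properties of the min-trapping extension. -/
theorem stmt8 (n : ℕ) (f : (Fin n → Bool) → Fin n → Bool) :
    BNle f (minExt f) ∧
    minExt (minExt f) = minExt f ∧
    MT (minExt f) = MT f := by
  refine ⟨?_, ?_, MT_minExt8 f⟩
  · intro x i hi
    by_cases hx : x ∈ Mset f
    · rw [minExt_mem8 hx]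
      show i ∈ delta x (opp (Tprin f x) x)
      rw [delta_opp8]
      exact ⟨f x, (Tprin_trap8 f x).2 x (Tprin_mem8 f x),
        fun h => (show x i ≠ f x i from hi) h.symm⟩
    · rw [minExt_not8 hx]
      simp [delta]
  · have hMT := MT_minExt8 f
    have hMset : Mset (minExt f) = Mset f := by unfold Mset; rw [hMT]
    funext x
    by_cases hx : x ∈ Mset f
    · rw [minExt_mem8 (show x ∈ Mset (minExt f) from hMset ▸ hx), minExt_mem8 hx]
      obtain ⟨X, hX, hxX⟩ := hx
      rw [Tprin_eq_MT8 hX hxX,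
        Tprin_eq_MT8 (show X ∈ MT (minExt f) from hMT ▸ hX) hxX]
    · rw [minExt_not8 (show x ∉ Mset (minExt f) by rw [hMset]; exact hx),
        minExt_not8 hx]
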